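/- Choquet integral upper-expectation bound: if Q is a probability measure on Θ with Q({ϑ : π(ϑ) > α}) ≥ 1 − α for all α ∈ [0,1], and ℓ : Θ → [0,∞) is measurable, then the ordinary expectation satisfies ∫ ℓ dQ ≤ ∫₀¹ sup{ℓ(ϑ) : π(ϑ) > α} dα, i.e., the Choquet integral of ℓ with respect to the possibility measure dominates the Q-expectation of ℓ. -/

import Mathlib

open Set MeasureTheory

theorem choquet_dominates_expectation
    {Θ : Type*} [MeasurableSpace Θ]
    (π : Θ → ℝ) (hmeas : Measurable π)
    (hπ0 : ∀ ϑ, 0 ≤ π ϑ) (hπ1 : ∀ ϑ, π ϑ ≤ 1)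
    (Q : Measure Θ) [IsProbabilityMeasure Q]
    (hcov : ∀ α ∈ Icc (0 : ℝ) 1, ENNReal.ofReal (1 - α) ≤ Q {ϑ | π ϑ > α})
    (ℓ : Θ → ℝ) (hℓmeas : Measurable ℓ) (hℓ0 : ∀ ϑ, 0 ≤ ℓ ϑ)
    (hℓint : Integrable ℓ Q)
    (h : ℝ → ℝ) (hdef : ∀ α, h α = ⨆ ϑ ∈ {ϑ : Θ | π ϑ > α}, ℓ ϑ)
    (hbdd : ∀ α ∈ Ico (0 : ℝ) 1, BddAbove (ℓ '' {ϑ : Θ | π ϑ > α}))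
    (hint : IntegrableOn h (Ioo (0 : ℝ) 1)) :
    ∫ ϑ, ℓ ϑ ∂Q ≤ ∫ α in Ioo (0 : ℝ) 1, h α := by
  -- key pointwise bound: ℓ ϑ ≤ h α whenever π ϑ > α, α ∈ [0,1)
  have key : ∀ α ∈ Ico (0:ℝ) 1, ∀ ϑ, α < π ϑ → ℓ ϑ ≤ h α := by
    intro α hα ϑ hϑ
    haveI : Nonempty Θ := ⟨ϑ⟩
    haveI : Nonempty {ϑ : Θ | π ϑ > α} := ⟨⟨ϑ, hϑ⟩⟩
    have hbA : BddAbove (Set.range fun i : {ϑ : Θ | π ϑ > α} ↦ ℓ i) := by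
      rw [← Set.image_eq_range]; exact hbdd α hα
    have hsup : ℓ ϑ ≤ ⨆ i : {ϑ : Θ | π ϑ > α}, ℓ i := le_ciSup hbA ⟨ϑ, hϑ⟩
    have heq := ciSup_subtype'' (s := {ϑ : Θ | π ϑ > α}) hbA
      (by rw [Real.sSup_empty]; exact (hℓ0 ϑ).trans hsup)
    rw [hdef, ← heq]
    exact hsup
  -- h is nonnegative on (0,1)
  have hne : ∀ α ∈ Ico (0:ℝ) 1, ∃ ϑ, α < π ϑ := by
    intro α hα
    by_contra hc
    push_neg at hc
    have hemp : {ϑ | π ϑ > α} = ∅ :=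
      eq_empty_iff_forall_notMem.2 fun ϑ => not_lt.2 (hc ϑ)
    have := hcov α ⟨hα.1, hα.2.le⟩
    rw [hemp, measure_empty, nonpos_iff_eq_zero, ENNReal.ofReal_eq_zero] at this
    linarith [hα.2]
  have hh0 : ∀ α ∈ Ioo (0:ℝ) 1, 0 ≤ h α := by
    intro α hα
    obtain ⟨ϑ, hϑ⟩ := hne α ⟨hα.1.le, hα.2⟩
    exact (hℓ0 ϑ).trans (key α ⟨hα.1.le, hα.2⟩ ϑ hϑ)
  have hh0ae : 0 ≤ᵐ[Measure.restrict volume (Ioo (0:ℝ) 1)] h :=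
    (ae_restrict_iff' measurableSet_Ioo).2 (Filter.Eventually.of_forall hh0)
  -- layer cake on both sides
  rw [hℓint.integral_eq_integral_meas_lt (Filter.Eventually.of_forall hℓ0),
      hint.integral_eq_integral_meas_lt hh0ae]
  set μ' := Measure.restrict volume (Ioo (0:ℝ) 1) with hμ'
  -- measurability of the tail measure function
  have hanti : Antitone fun t : ℝ => μ' {a | t < h a} := fun s t hst =>
    measure_mono fun a ha => lt_of_le_of_lt hst ha
  have hGmeas : Measurable fun t : ℝ => μ' {a | t < h a} := hanti.measurable
  -- integrability of the RHS integrand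
  have hGint : Integrable (fun t : ℝ => (μ' {a | t < h a}).toReal)
      (Measure.restrict volume (Ioi (0:ℝ))) := by
    apply integrable_toReal_of_lintegral_ne_top hGmeas.aemeasurable
    rw [← lintegral_eq_lintegral_meas_lt μ' hh0ae hint.aemeasurable]
    exact hint.lintegral_lt_top.ne
  -- pointwise comparison of tail measures
  refine integral_mono_of_nonneg (Filter.Eventually.of_forall fun t => ENNReal.toReal_nonneg) hGint ?_
  refine (ae_restrict_iff' measurableSet_Ioi).2 (Filter.Eventually.of_forall fun t ht => ?_)
  set p := (Q {a | t < ℓ a}).toReal with hp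
  have hQfin : Q {a | t < ℓ a} ≠ ⊤ := measure_ne_top Q _
  have hQp : Q {a | t < ℓ a} = ENNReal.ofReal p := (ENNReal.ofReal_toReal hQfin).symm
  have hp0 : 0 ≤ p := ENNReal.toReal_nonneg
  have hp1 : p ≤ 1 := by
    have h1 : (Q {a | t < ℓ a}).toReal ≤ (1 : ENNReal).toReal :=
      ENNReal.toReal_mono (by simp) prob_le_one
    simpa using h1
  -- the interval (0, p) lies inside {α | t < h α} ∩ (0,1)
  have hsub : Ioo (0:ℝ) p ⊆ {a | t < h a} ∩ Ioo (0:ℝ) 1 := by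
    intro α hα
    have hα1 : α < 1 := lt_of_lt_of_le hα.2 hp1
    have hαIco : α ∈ Ico (0:ℝ) 1 := ⟨hα.1.le, hα1⟩
    -- there exists ϑ with π ϑ > α and ℓ ϑ > t
    have hex : ∃ ϑ, α < π ϑ ∧ t < ℓ ϑ := by
      by_contra hc
      push_neg at hc
      have hdisj : Disjoint {ϑ | π ϑ > α} {a | t < ℓ a} := by
        rw [Set.disjoint_left]
        intro ϑ h1 h2
        exact absurd h2 (not_lt.2 (hc ϑ h1))
      have hmeasB : MeasurableSet {a | t < ℓ a} := measurableSet_lt measurable_const hℓmeas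
      have hun : Q ({ϑ | π ϑ > α} ∪ {a | t < ℓ a})
          = Q {ϑ | π ϑ > α} + Q {a | t < ℓ a} := measure_union hdisj hmeasB
      have h1 : ENNReal.ofReal (1 - α) + ENNReal.ofReal p
          ≤ Q ({ϑ | π ϑ > α} ∪ {a | t < ℓ a}) := by
        rw [hun, ← hQp]
        exact add_le_add (hcov α ⟨hα.1.le, hα1.le⟩) le_rfl
      have h2 : Q ({ϑ | π ϑ > α} ∪ {a | t < ℓ a}) ≤ 1 := prob_le_one
      have h3 : (1 : ENNReal) < ENNReal.ofReal (1 - α) + ENNReal.ofReal p := by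
        rw [← ENNReal.ofReal_add (by linarith) hp0, ← ENNReal.ofReal_one]
        exact ENNReal.ofReal_lt_ofReal_iff (by linarith [hα.2]) |>.2 (by linarith [hα.2])
      exact absurd (h3.trans_le (h1.trans h2)) (lt_irrefl _)
    obtain ⟨ϑ, hϑπ, hϑℓ⟩ := hex
    exact ⟨hϑℓ.trans_le (key α hαIco ϑ hϑπ), hα.1, hα1⟩
  -- conclude
  have hvol : ENNReal.ofReal p ≤ μ' {a | t < h a} := by
    rw [hμ', Measure.restrict_apply' measurableSet_Ioo]
    calc ENNReal.ofReal p = volume (Ioo (0:ℝ) p) := by rw [Real.volume_Ioo, sub_zero]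
    _ ≤ volume ({a | t < h a} ∩ Ioo (0:ℝ) 1) := measure_mono hsub
  have hfin : μ' {a | t < h a} ≠ ⊤ := by
    have : μ' {a | t < h a} ≤ μ' univ := measure_mono (subset_univ _)
    rw [hμ', Measure.restrict_apply_univ, Real.volume_Ioo] at this
    exact (this.trans_lt (by simp)).ne
  calc p = (ENNReal.ofReal p).toReal := by rw [ENNReal.toReal_ofReal hp0]
  _ ≤ (μ' {a | t < h a}).toReal := ENNReal.toReal_mono hfin hvol
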